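/- Let Q be a Laurent polynomial over 𝔽_p in d variables with Q(0) ≠ 0. Then for every n ∈ ℕ there is no x ∈ Q^⊥ satisfying x(0) = 1 and x(p^n·m) = 0 for every nonzero m ∈ S(Q). (This is the core of the proof that the shape S(Q) is a non-mixing set for any Markov subgroup annihilated by Q.) -/

import Mathlib

section Aux

variable {p : ℕ} [Fact p.Prime] {d : ℕ}

private lemma annih_mul (x : (Fin d → ℤ) → ZMod p)
    (R S : AddMonoidAlgebra (ZMod p) (Fin d → ℤ))
    (hR : ∀ k, R.coeff.sum (fun m c => c * x (k + m)) = 0) :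
    ∀ k, (S * R).coeff.sum (fun m c => c * x (k + m)) = 0 := by
  intro k
  rw [AddMonoidAlgebra.mul_def, AddMonoidAlgebra.coeff_finsuppSum]
  rw [Finsupp.sum_sum_index (by simp) (by intros; rw [add_mul])]
  refine Finset.sum_eq_zero fun a ha => ?_
  dsimp only
  rw [AddMonoidAlgebra.coeff_finsuppSum]
  rw [Finsupp.sum_sum_index (by simp) (by intros; rw [add_mul])]
  have : (R.coeff.sum fun b r => (S.coeff a * r) * x (k + (a + b))) =
      S.coeff a * (R.coeff.sum fun b r => r * x ((k + a) + b)) := by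
    rw [Finsupp.mul_sum]
    refine Finsupp.sum_congr fun b hb => ?_
    rw [mul_assoc, add_assoc]
  calc (R.coeff.sum fun b r => (AddMonoidAlgebra.single (a + b) (S.coeff a * r)).coeff.sum
          fun m c => c * x (k + m))
      = R.coeff.sum fun b r => (S.coeff a * r) * x (k + (a + b)) := by
        refine Finsupp.sum_congr fun b hb => ?_
        rw [AddMonoidAlgebra.coeff_single, Finsupp.sum_single_index (by simp)]
    _ = S.coeff a * (R.coeff.sum fun b r => r * x ((k + a) + b)) := this
    _ = 0 := by rw [hR (k + a), mul_zero]

private instance : CharP (AddMonoidAlgebra (ZMod p) (Fin d → ℤ)) p :=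
  charP_of_injective_ringHom
    (f := (AddMonoidAlgebra.singleZeroRingHom :
      ZMod p →+* AddMonoidAlgebra (ZMod p) (Fin d → ℤ)))
    (AddMonoidAlgebra.single_right_injective (m := 0)) p

private lemma pow_p_eq (R : AddMonoidAlgebra (ZMod p) (Fin d → ℤ)) :
    R ^ p = AddMonoidAlgebra.mapDomain (p • ·) R := by
  have hp : R ^ p = frobenius (AddMonoidAlgebra (ZMod p) (Fin d → ℤ)) p R :=
    (frobenius_def p R).symm
  rw [hp]
  conv_lhs => rw [← AddMonoidAlgebra.sum_coeff_single R]
  rw [map_finsuppSum]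
  rw [AddMonoidAlgebra.mapDomain, Finsupp.mapDomain, AddMonoidAlgebra.ofCoeff_finsuppSum]
  refine Finsupp.sum_congr fun m hm => ?_
  rw [frobenius_def, AddMonoidAlgebra.single_pow, ZMod.pow_card]
  rfl

private lemma pow_pn_eq (R : AddMonoidAlgebra (ZMod p) (Fin d → ℤ)) (n : ℕ) :
    R ^ (p ^ n) = AddMonoidAlgebra.mapDomain ((p ^ n : ℕ) • ·) R := by
  induction n with
  | zero =>
    rw [pow_zero, pow_one]
    have : ((1 : ℕ) • · : (Fin d → ℤ) → (Fin d → ℤ)) = id := funext fun m => one_smul ℕ m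
    apply AddMonoidAlgebra.coeff_injective
    rw [AddMonoidAlgebra.coeff_mapDomain, this, Finsupp.mapDomain_id]
  | succ n ih =>
    rw [pow_succ, pow_mul, ih, pow_p_eq]
    apply AddMonoidAlgebra.coeff_injective
    rw [AddMonoidAlgebra.coeff_mapDomain, AddMonoidAlgebra.coeff_mapDomain,
      AddMonoidAlgebra.coeff_mapDomain, ← Finsupp.mapDomain_comp]
    refine Finsupp.mapDomain_congr fun m hm => ?_
    show p • ((p ^ n : ℕ) • m) = (p ^ (n + 1) : ℕ) • m
    rw [smul_smul, pow_succ, mul_comm]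

end Aux

/-- Let `Q` be a Laurent polynomial over `𝔽_p` in `d` variables
(a finitely supported function `Q : ℤ^d → 𝔽_p`) with `Q(0) ≠ 0`.  Then for every `n ∈ ℕ`
there is no `x ∈ Q^⊥` satisfying `x(0) = 1` and `x(p^n·m) = 0` for every nonzero
`m ∈ S(Q)`.  Here `Q^⊥ = {x : ℤ^d → 𝔽_p | ∀ k, Σ_{m ∈ S(Q)} Q(m)·x(k+m) = 0}`. -/
theorem no_point_of_Qperp_with_prescribed_values (p : ℕ) [Fact p.Prime] (d : ℕ) (hd : 1 ≤ d)
    (Q : (Fin d → ℤ) →₀ ZMod p) (hQ0 : Q 0 ≠ 0) (n : ℕ) :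
    ¬ ∃ x : (Fin d → ℤ) → ZMod p,
        (∀ k : Fin d → ℤ, ∑ m ∈ Q.support, Q m * x (k + m) = 0) ∧
        x 0 = 1 ∧
        (∀ m ∈ Q.support, m ≠ 0 → x ((p ^ n : ℕ) • m) = 0) := by
  rintro ⟨x, hx1, hx2, hx3⟩
  classical
  have hp : 0 < p := (Fact.out : p.Prime).pos
  -- view Q as an element of the group algebra
  set R : AddMonoidAlgebra (ZMod p) (Fin d → ℤ) := AddMonoidAlgebra.ofCoeff Q with hR
  have hann : ∀ k, R.coeff.sum (fun m c => c * x (k + m)) = 0 := by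
    intro k
    have := hx1 k
    simp only [Finsupp.sum]
    calc (∑ m ∈ R.coeff.support, R.coeff m * x (k + m)) = ∑ m ∈ Q.support, Q m * x (k + m) := rfl
      _ = 0 := hx1 k
  -- Q^⊥ is closed under multiplication by group algebra elements
  have hpow : ∀ k, (R ^ (p ^ n)).coeff.sum (fun m c => c * x (k + m)) = 0 := by
    intro k
    have h1 : (1 : ℕ) ≤ p ^ n := Nat.one_le_pow _ _ hp
    have : R ^ (p ^ n) = R ^ (p ^ n - 1) * R := by
      rw [← pow_succ, Nat.sub_add_cancel h1]
    rw [this]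
    exact annih_mul x R (R ^ (p ^ n - 1)) hann k
  have hmd := hpow 0
  rw [pow_pn_eq] at hmd
  rw [AddMonoidAlgebra.coeff_mapDomain, Finsupp.mapDomain, Finsupp.sum_sum_index (by simp) (by intros; rw [add_mul])] at hmd
  have hval : (R.coeff.sum fun m c => ((fun₀ | (p ^ n : ℕ) • m => c)).sum
      fun m' c' => c' * x (0 + m')) = R.coeff.sum fun m c => c * x ((p ^ n : ℕ) • m) := by
    refine Finsupp.sum_congr fun m hm => ?_
    rw [Finsupp.sum_single_index (by simp), zero_add]
  rw [hval] at hmd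
  -- evaluate the sum: all terms with m ≠ 0 vanish
  rw [Finsupp.sum] at hmd
  have h0mem : (0 : Fin d → ℤ) ∈ Q.support := Finsupp.mem_support_iff.mpr hQ0
  have := Finset.sum_eq_single_of_mem (0 : Fin d → ℤ) h0mem
    (f := fun m => R.coeff m * x ((p ^ n : ℕ) • m))
    (fun m hm hm0 => by show R.coeff m * x ((p ^ n : ℕ) • m) = 0; rw [hx3 m hm hm0, mul_zero])
  rw [this] at hmd
  simp only [smul_zero, hx2, mul_one] at hmd
  exact hQ0 hmd
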